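/- Let 𝒜 be a finite collection of networks satisfying joint positivity and containing at least one network that correctly specifies the interference structure. Under consistency, for every pair of distinct exposure levels c_k ≠ c_ℓ, the covariance of the NMR Horvitz–Thompson estimators satisfies: Cov_Z[μ̂_𝒜(c_k)(Z), μ̂_𝒜(c_ℓ)(Z)] = n^{-2} Σ_{i=1}^n Σ_{j≠i, p_ij^𝒜(c_k,c_ℓ)>0} (p_ij^𝒜(c_k,c_ℓ) − p_i^𝒜(c_k) p_j^𝒜(c_ℓ)) · Ỹ_i(c_k) Ỹ_j(c_ℓ) / (p_i^𝒜(c_k) p_j^𝒜(c_ℓ)) − n^{-2} Σ_{i=1}^n Σ_{j : p_ij^𝒜(c_k,c_ℓ)=0} Ỹ_i(c_k) Ỹ_j(c_ℓ). -/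

import Mathlib

open Finset

noncomputable section

open scoped Classical

/-- A network on `n` units: symmetric Boolean adjacency matrix with zero diagonal. -/
def IsNetwork {n : ℕ} (A : Fin n → Fin n → Bool) : Prop :=
  (∀ i j, A i j = A j i) ∧ ∀ i, A i i = false

/-- Real-valued indicator of a proposition. -/
def ind (p : Prop) [Decidable p] : ℝ := if p then 1 else 0

/-- Expectation of `g` with respect to the distribution `P` on the finite treatment space. -/
def expec {Z : Type} [Fintype Z] (P : Z → ℝ) (g : Z → ℝ) : ℝ := ∑ z, P z * g z

/-- Exposure probability `p_i^A(c)`. -/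
def pExp {n : ℕ} {Z C : Type} [Fintype Z] [DecidableEq C] (P : Z → ℝ)
    (f : Z → (Fin n → Bool) → C) (A : Fin n → Fin n → Bool) (i : Fin n) (c : C) : ℝ :=
  expec P (fun z => ind (f z (A i) = c))

/-- The network `A` satisfies positivity. -/
def Positivity {n : ℕ} {Z C : Type} [Fintype Z] [DecidableEq C] (P : Z → ℝ)
    (f : Z → (Fin n → Bool) → C) (A : Fin n → Fin n → Bool) : Prop :=
  ∀ (i : Fin n) (c : C), 0 < pExp P f A i c

/-- The network `A` correctly specifies the interference structure:
positivity together with `Y_i(z) = Ỹ_i(f(z, A_i))`. -/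
def CorrectlySpecifies {n : ℕ} {Z C : Type} [Fintype Z] [DecidableEq C] (P : Z → ℝ)
    (f : Z → (Fin n → Bool) → C) (Y : Fin n → Z → ℝ) (Yt : Fin n → C → ℝ)
    (A : Fin n → Fin n → Bool) : Prop :=
  Positivity P f A ∧ ∀ (i : Fin n) (z : Z), Y i z = Yt i (f z (A i))

/-- Mean potential outcome `μ(c)`. -/
def muBar {n : ℕ} {C : Type} (Yt : Fin n → C → ℝ) (c : C) : ℝ :=
  (1 / (n : ℝ)) * ∑ i, Yt i c

/-- Causal effect `τ(c, c')`. -/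
def tauBar {n : ℕ} {C : Type} (Yt : Fin n → C → ℝ) (c c' : C) : ℝ :=
  muBar Yt c - muBar Yt c'

/-- Horvitz–Thompson estimator of `μ(c)` using network `A` and observed outcomes `Yo`. -/
def muHat {n : ℕ} {Z C : Type} [Fintype Z] [DecidableEq C] (P : Z → ℝ)
    (f : Z → (Fin n → Bool) → C) (A : Fin n → Fin n → Bool) (Yo : Z → Fin n → ℝ)
    (c : C) (z : Z) : ℝ :=
  (1 / (n : ℝ)) * ∑ i, ind (f z (A i) = c) * Yo z i / pExp P f A i c

/-- Plug-in Horvitz–Thompson estimator of `τ(c, c')`. -/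
def tauHat {n : ℕ} {Z C : Type} [Fintype Z] [DecidableEq C] (P : Z → ℝ)
    (f : Z → (Fin n → Bool) → C) (A : Fin n → Fin n → Bool) (Yo : Z → Fin n → ℝ)
    (c c' : C) (z : Z) : ℝ :=
  muHat P f A Yo c z - muHat P f A Yo c' z

/-- Joint exposure probability `p_i^{(A, A')}(c, c')`. -/
def pJoint {n : ℕ} {Z C : Type} [Fintype Z] [DecidableEq C] (P : Z → ℝ)
    (f : Z → (Fin n → Bool) → C) (A A' : Fin n → Fin n → Bool) (i : Fin n) (c c' : C) : ℝ :=
  expec P (fun z => ind (f z (A i) = c) * ind (f z (A' i) = c'))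

/-- Conditional exposure probability `p_i(c; A ∣ c'; A')`. -/
def pCond {n : ℕ} {Z C : Type} [Fintype Z] [DecidableEq C] (P : Z → ℝ)
    (f : Z → (Fin n → Bool) → C) (A A' : Fin n → Fin n → Bool) (i : Fin n) (c c' : C) : ℝ :=
  pJoint P f A A' i c c' / pExp P f A' i c'

/-- Indicator `I_i^𝒜(z, c)` that unit `i` has exposure `c` under every network in `𝒜`. -/
def indAll {n : ℕ} {Z C : Type} [DecidableEq C] (f : Z → (Fin n → Bool) → C)
    (𝒜 : Finset (Fin n → Fin n → Bool)) (z : Z) (i : Fin n) (c : C) : ℝ :=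
  ∏ A ∈ 𝒜, ind (f z (A i) = c)

/-- Joint exposure probability `p_i^𝒜(c)`. -/
def pNMR {n : ℕ} {Z C : Type} [Fintype Z] [DecidableEq C] (P : Z → ℝ)
    (f : Z → (Fin n → Bool) → C) (𝒜 : Finset (Fin n → Fin n → Bool)) (i : Fin n) (c : C) : ℝ :=
  expec P (fun z => indAll f 𝒜 z i c)

/-- Joint positivity of the collection `𝒜`. -/
def JointPositivity {n : ℕ} {Z C : Type} [Fintype Z] [DecidableEq C] (P : Z → ℝ)
    (f : Z → (Fin n → Bool) → C) (𝒜 : Finset (Fin n → Fin n → Bool)) : Prop :=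
  ∀ (i : Fin n) (c : C), 0 < pNMR P f 𝒜 i c

/-- NMR Horvitz–Thompson estimator of `μ(c)`. -/
def muHatNMR {n : ℕ} {Z C : Type} [Fintype Z] [DecidableEq C] (P : Z → ℝ)
    (f : Z → (Fin n → Bool) → C) (𝒜 : Finset (Fin n → Fin n → Bool))
    (Yo : Z → Fin n → ℝ) (c : C) (z : Z) : ℝ :=
  (1 / (n : ℝ)) * ∑ i, indAll f 𝒜 z i c * Yo z i / pNMR P f 𝒜 i c

/-- NMR plug-in estimator of `τ(c, c')`. -/
def tauHatNMR {n : ℕ} {Z C : Type} [Fintype Z] [DecidableEq C] (P : Z → ℝ)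
    (f : Z → (Fin n → Bool) → C) (𝒜 : Finset (Fin n → Fin n → Bool))
    (Yo : Z → Fin n → ℝ) (c c' : C) (z : Z) : ℝ :=
  muHatNMR P f 𝒜 Yo c z - muHatNMR P f 𝒜 Yo c' z

/-- Pairwise joint exposure probability `p_{ij}^𝒜(c, c')`. -/
def pPairNMR {n : ℕ} {Z C : Type} [Fintype Z] [DecidableEq C] (P : Z → ℝ)
    (f : Z → (Fin n → Bool) → C) (𝒜 : Finset (Fin n → Fin n → Bool))
    (i j : Fin n) (c c' : C) : ℝ :=
  expec P (fun z => indAll f 𝒜 z i c * indAll f 𝒜 z j c')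

/-- Variance with respect to the treatment distribution `P`. -/
def varZ {Z : Type} [Fintype Z] (P : Z → ℝ) (g : Z → ℝ) : ℝ :=
  expec P (fun z => (g z - expec P g) ^ 2)

/-- Covariance with respect to the treatment distribution `P`. -/
def covZ {Z : Type} [Fintype Z] (P : Z → ℝ) (g h : Z → ℝ) : ℝ :=
  expec P (fun z => (g z - expec P g) * (h z - expec P h))

section MyAux

variable {n : ℕ} {Z C : Type} [Fintype Z] [DecidableEq C]

lemma my_ind_nonneg (p : Prop) [Decidable p] : 0 ≤ ind p := by
  unfold ind; split <;> norm_num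

lemma my_indAll_nonneg (f : Z → (Fin n → Bool) → C) (𝒜 : Finset (Fin n → Fin n → Bool))
    (z : Z) (i : Fin n) (c : C) : 0 ≤ indAll f 𝒜 z i c :=
  Finset.prod_nonneg fun _ _ => my_ind_nonneg _

lemma my_expec_sum {ι : Type*} (P : Z → ℝ) (s : Finset ι) (g : ι → Z → ℝ) :
    expec P (fun z => ∑ i ∈ s, g i z) = ∑ i ∈ s, expec P (g i) := by
  unfold expec
  simp_rw [Finset.mul_sum]
  exact Finset.sum_comm

lemma my_expec_const_mul (P : Z → ℝ) (a : ℝ) (g : Z → ℝ) :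
    expec P (fun z => a * g z) = a * expec P g := by
  unfold expec; rw [Finset.mul_sum]; exact Finset.sum_congr rfl fun z _ => by ring

lemma my_covZ_eq (P : Z → ℝ) (hPsum : ∑ z, P z = 1) (g h : Z → ℝ) :
    covZ P g h = expec P (fun z => g z * h z) - expec P g * expec P h := by
  unfold covZ
  rw [show expec P (fun z => (g z - expec P g) * (h z - expec P h))
      = ∑ z, (P z * (g z * h z) - expec P h * (P z * g z) - expec P g * (P z * h z)
          + (expec P g * expec P h) * P z) from Finset.sum_congr rfl fun z _ => by ring]
  rw [Finset.sum_add_distrib, Finset.sum_sub_distrib, Finset.sum_sub_distrib,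
    ← Finset.mul_sum, ← Finset.mul_sum, ← Finset.mul_sum, hPsum]
  unfold expec
  ring

lemma my_pPair_nonneg (P : Z → ℝ) (hP : ∀ z, 0 ≤ P z) (f : Z → (Fin n → Bool) → C)
    (𝒜 : Finset (Fin n → Fin n → Bool)) (i j : Fin n) (c c' : C) :
    0 ≤ pPairNMR P f 𝒜 i j c c' :=
  Finset.sum_nonneg fun z _ => mul_nonneg (hP z)
    (mul_nonneg (my_indAll_nonneg f 𝒜 z i c) (my_indAll_nonneg f 𝒜 z j c'))

end MyAux

/-- Covariance of the NMR Horvitz–Thompson estimators at two distinct exposure levels. -/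
theorem NMR_HT_covariance {n : ℕ} {Z C : Type} [Fintype Z] [Fintype C] [DecidableEq C]
    (P : Z → ℝ) (hP : ∀ z, 0 ≤ P z) (hPsum : ∑ z, P z = 1)
    (f : Z → (Fin n → Bool) → C) (Y : Fin n → Z → ℝ) (Yt : Fin n → C → ℝ)
    (𝒜 : Finset (Fin n → Fin n → Bool))
    (h𝒜Net : ∀ A ∈ 𝒜, IsNetwork A)
    (hJoint : JointPositivity P f 𝒜)
    (h𝒜corr : ∃ A ∈ 𝒜, CorrectlySpecifies P f Y Yt A)
    (Astar : Fin n → Fin n → Bool) (hAstarNet : IsNetwork Astar)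
    (hAstar : CorrectlySpecifies P f Y Yt Astar)
    (Yo : Z → Fin n → ℝ) (hYo : ∀ (z : Z) (i : Fin n), Yo z i = Yt i (f z (Astar i))) :
    ∀ ck cl : C, ck ≠ cl →
      covZ P (fun z => muHatNMR P f 𝒜 Yo ck z) (fun z => muHatNMR P f 𝒜 Yo cl z) =
        (1 / (n : ℝ) ^ 2) *
            (∑ i, ∑ j ∈ univ.filter (fun j => j ≠ i ∧ 0 < pPairNMR P f 𝒜 i j ck cl),
              (pPairNMR P f 𝒜 i j ck cl - pNMR P f 𝒜 i ck * pNMR P f 𝒜 j cl) *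
                (Yt i ck * Yt j cl) / (pNMR P f 𝒜 i ck * pNMR P f 𝒜 j cl))
        - (1 / (n : ℝ) ^ 2) *
            (∑ i, ∑ j ∈ univ.filter (fun j => pPairNMR P f 𝒜 i j ck cl = 0),
              Yt i ck * Yt j cl) := by
  obtain ⟨A0, hA0, hcorr⟩ := h𝒜corr
  intro ck cl hne
  have hppos : ∀ (i : Fin n) (c : C), 0 < pNMR P f 𝒜 i c := hJoint
  have hpne : ∀ (i : Fin n) (c : C), pNMR P f 𝒜 i c ≠ 0 := fun i c => (hppos i c).ne'
  -- pointwise replacement of observed outcomes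
  have hrep : ∀ (z : Z) (i : Fin n) (c : C),
      indAll f 𝒜 z i c * Yo z i = indAll f 𝒜 z i c * Yt i c := by
    intro z i c
    by_cases h : f z (A0 i) = c
    · have hy : Yo z i = Yt i c := by
        rw [hYo, ← hAstar.2 i z, hcorr.2 i z, h]
      rw [hy]
    · have h0 : indAll f 𝒜 z i c = 0 :=
        Finset.prod_eq_zero hA0 (by simp [ind, h])
      rw [h0, zero_mul, zero_mul]
  set a : Fin n → C → Z → ℝ :=
    fun i c z => indAll f 𝒜 z i c * Yo z i / pNMR P f 𝒜 i c with ha_def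
  have ha : ∀ (i : Fin n) (c : C) (z : Z),
      a i c z = (Yt i c / pNMR P f 𝒜 i c) * indAll f 𝒜 z i c := by
    intro i c z
    show indAll f 𝒜 z i c * Yo z i / pNMR P f 𝒜 i c = _
    rw [hrep]; ring
  have hmu : ∀ c : C, (fun z => muHatNMR P f 𝒜 Yo c z)
      = fun z => (1 / (n : ℝ)) * ∑ i, a i c z := by
    intro c; simp only [ha_def]; rfl
  -- expectation of single terms
  have hEa : ∀ (i : Fin n) (c : C), expec P (a i c) = Yt i c := by
    intro i c
    have : expec P (a i c) = (Yt i c / pNMR P f 𝒜 i c) * pNMR P f 𝒜 i c := by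
      rw [show a i c = fun z => (Yt i c / pNMR P f 𝒜 i c) * indAll f 𝒜 z i c from
        funext fun z => ha i c z]
      exact my_expec_const_mul P _ _
    rw [this, div_mul_cancel₀ _ (hpne i c)]
  -- expectation of pairwise products
  have hEab : ∀ i j : Fin n, expec P (fun z => a i ck z * a j cl z)
      = pPairNMR P f 𝒜 i j ck cl * (Yt i ck * Yt j cl)
          / (pNMR P f 𝒜 i ck * pNMR P f 𝒜 j cl) := by
    intro i j
    have : (fun z => a i ck z * a j cl z)
        = fun z => (Yt i ck * Yt j cl / (pNMR P f 𝒜 i ck * pNMR P f 𝒜 j cl))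
            * (indAll f 𝒜 z i ck * indAll f 𝒜 z j cl) := by
      funext z; rw [ha, ha]; ring
    rw [this, my_expec_const_mul]
    show Yt i ck * Yt j cl / _ * pPairNMR P f 𝒜 i j ck cl = _
    ring
  -- the diagonal pairwise probability vanishes
  have hdiag : ∀ i : Fin n, pPairNMR P f 𝒜 i i ck cl = 0 := by
    intro i
    unfold pPairNMR expec
    apply Finset.sum_eq_zero
    intro z _
    show P z * (indAll f 𝒜 z i ck * indAll f 𝒜 z i cl) = 0
    rcases eq_or_ne (f z (A0 i)) ck with h | h
    · have h0 : indAll f 𝒜 z i cl = 0 :=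
        Finset.prod_eq_zero hA0 (by simp [ind, h, hne])
      rw [h0]; ring
    · have h0 : indAll f 𝒜 z i ck = 0 :=
        Finset.prod_eq_zero hA0 (by simp [ind, h])
      rw [h0]; ring
  -- covariance as a double sum
  set D : Fin n → Fin n → ℝ := fun i j =>
    pPairNMR P f 𝒜 i j ck cl * (Yt i ck * Yt j cl)
      / (pNMR P f 𝒜 i ck * pNMR P f 𝒜 j cl) - Yt i ck * Yt j cl with hD_def
  have hcov : covZ P (fun z => muHatNMR P f 𝒜 Yo ck z) (fun z => muHatNMR P f 𝒜 Yo cl z)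
      = (1 / (n : ℝ)) * (1 / (n : ℝ)) * ∑ i, ∑ j, D i j := by
    rw [hmu ck, hmu cl, my_covZ_eq P hPsum]
    have h1 : expec P (fun z => ((1 / (n : ℝ)) * ∑ i, a i ck z)
        * ((1 / (n : ℝ)) * ∑ j, a j cl z))
        = (1 / (n : ℝ)) * (1 / (n : ℝ))
            * ∑ i, ∑ j, expec P (fun z => a i ck z * a j cl z) := by
      rw [show (fun z => ((1 / (n : ℝ)) * ∑ i, a i ck z) * ((1 / (n : ℝ)) * ∑ j, a j cl z))
          = fun z => ((1 / (n : ℝ)) * (1 / (n : ℝ)))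
              * ∑ i, ∑ j, a i ck z * a j cl z from funext fun z => by
        rw [show ((1 / (n : ℝ)) * ∑ i, a i ck z) * ((1 / (n : ℝ)) * ∑ j, a j cl z)
            = ((1 / (n : ℝ)) * (1 / (n : ℝ))) * ((∑ i, a i ck z) * ∑ j, a j cl z) by ring,
          Finset.sum_mul_sum]]
      rw [my_expec_const_mul, my_expec_sum]
      congr 1
      exact Finset.sum_congr rfl fun i _ => my_expec_sum P univ _
    have h2 : ∀ c : C, expec P (fun z => (1 / (n : ℝ)) * ∑ i, a i c z)
        = (1 / (n : ℝ)) * ∑ i, Yt i c := by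
      intro c
      rw [my_expec_const_mul, my_expec_sum]
      congr 1
      exact Finset.sum_congr rfl fun i _ => hEa i c
    rw [h1, h2, h2]
    simp_rw [hEab]
    rw [show ((1 / (n : ℝ)) * ∑ i, Yt i ck) * ((1 / (n : ℝ)) * ∑ j, Yt j cl)
        = (1 / (n : ℝ)) * (1 / (n : ℝ)) * ∑ i, ∑ j, Yt i ck * Yt j cl by
      rw [show ((1 / (n : ℝ)) * ∑ i, Yt i ck) * ((1 / (n : ℝ)) * ∑ j, Yt j cl)
          = ((1 / (n : ℝ)) * (1 / (n : ℝ))) * ((∑ i, Yt i ck) * ∑ j, Yt j cl) by ring,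
        Finset.sum_mul_sum]]
    rw [← mul_sub]
    congr 1
    rw [← Finset.sum_sub_distrib]
    exact Finset.sum_congr rfl fun i _ => (Finset.sum_sub_distrib _ _).symm
  -- split the inner sum
  have hsplit : ∀ i : Fin n, ∑ j, D i j
      = (∑ j ∈ univ.filter (fun j => j ≠ i ∧ 0 < pPairNMR P f 𝒜 i j ck cl),
          (pPairNMR P f 𝒜 i j ck cl - pNMR P f 𝒜 i ck * pNMR P f 𝒜 j cl) *
            (Yt i ck * Yt j cl) / (pNMR P f 𝒜 i ck * pNMR P f 𝒜 j cl))
        + (∑ j ∈ univ.filter (fun j => pPairNMR P f 𝒜 i j ck cl = 0),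
            -(Yt i ck * Yt j cl)) := by
    intro i
    rw [← Finset.sum_filter_add_sum_filter_not univ
      (fun j => j ≠ i ∧ 0 < pPairNMR P f 𝒜 i j ck cl) (D i)]
    congr 1
    · apply Finset.sum_congr rfl
      intro j hj
      rw [Finset.mem_filter] at hj
      show pPairNMR P f 𝒜 i j ck cl * (Yt i ck * Yt j cl)
          / (pNMR P f 𝒜 i ck * pNMR P f 𝒜 j cl) - Yt i ck * Yt j cl = _
      rw [div_sub' (mul_ne_zero (hpne i ck) (hpne j cl))]
      congr 1
      ring
    · have hfe : univ.filter (fun j => ¬ (j ≠ i ∧ 0 < pPairNMR P f 𝒜 i j ck cl))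
          = univ.filter (fun j => pPairNMR P f 𝒜 i j ck cl = 0) := by
        apply Finset.filter_congr
        intro j _
        constructor
        · intro h
          by_contra hne0
          have hpos : 0 < pPairNMR P f 𝒜 i j ck cl :=
            lt_of_le_of_ne (my_pPair_nonneg P hP f 𝒜 i j ck cl) (Ne.symm hne0)
          exact h ⟨fun hji => hne0 (by rw [hji]; exact hdiag i), hpos⟩
        · intro h hcon
          exact hcon.2.ne' h
      rw [hfe]
      apply Finset.sum_congr rfl
      intro j hj
      rw [Finset.mem_filter] at hj
      show pPairNMR P f 𝒜 i j ck cl * (Yt i ck * Yt j cl)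
          / (pNMR P f 𝒜 i ck * pNMR P f 𝒜 j cl) - Yt i ck * Yt j cl = _
      rw [hj.2, zero_mul, zero_div, zero_sub]
  rw [hcov]
  rw [Finset.sum_congr rfl fun i _ => hsplit i]
  rw [Finset.sum_add_distrib]
  simp_rw [Finset.sum_neg_distrib]
  ring
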